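/- Let ℓ be a line segment dividing a convex quadrilateral Q in the plane into two subsets Q₊ and Q₋ with nonempty interiors, and let R be a convex set containing Q. If there exist segments s₊ ⊆ Q₊ and s₋ ⊆ Q₋ each of which crosses R (i.e., joins two points of opposite sides of ∂R) and ℓ has both endpoints on ∂R, then ℓ also crosses R. Equivalently (contrapositive used in the paper): if ℓ does not cross R, then there cannot exist crossing segments in both Q₊ and Q₋. -/
import Mathlib


open Set

private lemma exists_on_segment_eq
    (f : EuclideanSpace ℝ (Fin 2) →ₗ[ℝ] ℝ) (c : ℝ)
    (p q : EuclideanSpace ℝ (Fin 2)) (hp : f p ≤ c) (hq : c ≤ f q) :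
    ∃ x ∈ segment ℝ p q, f x = c := by
  have hcont : Continuous f := f.continuous_of_finiteDimensional
  have h : Continuous fun t : ℝ => f ((1 - t) • p + t • q) := by
    fun_prop
  have := intermediate_value_Icc (by norm_num : (0:ℝ) ≤ 1)
    (h.continuousOn (s := Icc (0:ℝ) 1))
  have hc : c ∈ Icc (f ((1-(0:ℝ)) • p + (0:ℝ) • q)) (f ((1-(1:ℝ)) • p + (1:ℝ) • q)) := by
    simp only [sub_zero, one_smul, zero_smul, add_zero, sub_self, zero_add]
    exact ⟨hp, hq⟩
  obtain ⟨t, ht, hft⟩ := this hc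
  exact ⟨(1 - t) • p + t • q, ⟨1 - t, t, by linarith [ht.2], ht.1, by ring, rfl⟩, hft⟩

/-- Planar convexity fact: if a line `{f = c}` divides a convex set `Q ⊆ R` into the parts
`Q₊ = Q ∩ {f ≥ c}` and `Q₋ = Q ∩ {f ≤ c}` (both with nonempty interior), and two opposite
"sides" `S₁, S₂` of the convex region `R` (disjoint convex subsets of the frontier of `R`)
are joined by a crossing segment inside `Q₊` and by a crossing segment inside `Q₋`, then the
dividing line itself crosses `R`: it meets `S₁` and `S₂`, and the corresponding segment lies
in `R`. -/
theorem dividing_line_crosses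
    (R Q : Set (EuclideanSpace ℝ (Fin 2))) (hR : Convex ℝ R) (hQ : Convex ℝ Q)
    (hQR : Q ⊆ R)
    (f : EuclideanSpace ℝ (Fin 2) →ₗ[ℝ] ℝ) (c : ℝ)
    (hQplus : (interior (Q ∩ {z | c ≤ f z})).Nonempty)
    (hQminus : (interior (Q ∩ {z | f z ≤ c})).Nonempty)
    (S₁ S₂ : Set (EuclideanSpace ℝ (Fin 2)))
    (hS₁ : Convex ℝ S₁) (hS₂ : Convex ℝ S₂) (hS₁R : S₁ ⊆ frontier R) (hS₂R : S₂ ⊆ frontier R)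
    (hdisj : Disjoint S₁ S₂)
    (pp qp pm qm : EuclideanSpace ℝ (Fin 2))
    (hpp : pp ∈ S₁) (hqp : qp ∈ S₂) (hsp : segment ℝ pp qp ⊆ Q ∩ {z | c ≤ f z})
    (hpm : pm ∈ S₁) (hqm : qm ∈ S₂) (hsm : segment ℝ pm qm ⊆ Q ∩ {z | f z ≤ c}) :
    ∃ a ∈ S₁, ∃ b ∈ S₂, f a = c ∧ f b = c ∧ segment ℝ a b ⊆ R := by
  have hfpp : c ≤ f pp := (hsp (left_mem_segment ℝ pp qp)).2
  have hfqp : c ≤ f qp := (hsp (right_mem_segment ℝ pp qp)).2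
  have hfpm : f pm ≤ c := (hsm (left_mem_segment ℝ pm qm)).2
  have hfqm : f qm ≤ c := (hsm (right_mem_segment ℝ pm qm)).2
  obtain ⟨a, haseg, hfa⟩ := exists_on_segment_eq f c pm pp hfpm hfpp
  obtain ⟨b, hbseg, hfb⟩ := exists_on_segment_eq f c qm qp hfqm hfqp
  have hppR : pp ∈ R := hQR (hsp (left_mem_segment ℝ pp qp)).1
  have hqpR : qp ∈ R := hQR (hsp (right_mem_segment ℝ pp qp)).1
  have hpmR : pm ∈ R := hQR (hsm (left_mem_segment ℝ pm qm)).1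
  have hqmR : qm ∈ R := hQR (hsm (right_mem_segment ℝ pm qm)).1
  have haR : a ∈ R := hR.segment_subset hpmR hppR haseg
  have hbR : b ∈ R := hR.segment_subset hqmR hqpR hbseg
  exact ⟨a, hS₁.segment_subset hpm hpp haseg, b, hS₂.segment_subset hqm hqp hbseg,
    hfa, hfb, hR.segment_subset haR hbR⟩
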